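/- arXiv:2505.03304 — 6 statements merged into one kernel-verified Lean document; each statement's English description precedes it below -/
import Mathlib

section
/- Let d > 0, c > 0, t > 0 and G(t,X) = exp(-X²/(4dt))/√(4πdt). Then for every ξ > 0, one has e^{(c/d)ξ}·∫_{ct}^∞ G(t, x + ξ) dx ≤ exp(-(c√t/(2√d) - ξ/(2√(dt)))²). -/
open Real MeasureTheory

/-- Tail bound for the shifted heat kernel with exponential weight: for all `ξ > 0`,
`e^{(c/d)ξ}·∫_{ct}^∞ G(t, x + ξ) dx ≤ exp(-(c√t/(2√d) - ξ/(2√(dt)))²)`. -/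
theorem heat_kernel_tail_bound_plus (d c t ξ : ℝ)
    (hd : 0 < d) (hc : 0 < c) (ht : 0 < t) (hξ : 0 < ξ)
    (G : ℝ → ℝ → ℝ)
    (hG : ∀ t X, G t X = Real.exp (-X ^ 2 / (4 * d * t)) / Real.sqrt (4 * Real.pi * d * t)) :
    Real.exp ((c / d) * ξ) * (∫ x in Set.Ioi (c * t), G t (x + ξ))
      ≤ Real.exp (-(c * Real.sqrt t / (2 * Real.sqrt d) - ξ / (2 * Real.sqrt (d * t))) ^ 2) := by
  set s : ℝ := 4 * d * t with hs_def
  have hs : 0 < s := by positivity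
  set a : ℝ := c * t + ξ with ha_def
  have ha : 0 < a := by positivity
  have hsqrt : 0 < Real.sqrt (4 * Real.pi * d * t) := by positivity
  -- integrability facts
  have hint : Integrable (fun x : ℝ => Real.exp (-(1/s) * x ^ 2)) := by
    exact integrable_exp_neg_mul_sq (by positivity)
  have hintL : IntegrableOn (fun x : ℝ => Real.exp (-(x + ξ) ^ 2 / s)) (Set.Ioi (c * t)) := by
    have := (hint.comp_add_right ξ)
    have h2 : (fun x : ℝ => Real.exp (-(1/s) * (x + ξ) ^ 2)) = fun x => Real.exp (-(x + ξ) ^ 2 / s) := by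
      funext x; ring_nf
    rw [h2] at this
    exact this.integrableOn
  have hintR : IntegrableOn (fun x : ℝ => Real.exp (-a ^ 2 / s) * Real.exp (-(x - c * t) ^ 2 / s))
      (Set.Ioi (c * t)) := by
    have := (hint.comp_sub_right (c * t)).const_mul (Real.exp (-a ^ 2 / s))
    have h2 : (fun x : ℝ => Real.exp (-a ^ 2 / s) * Real.exp (-(1/s) * (x - c * t) ^ 2))
        = fun x => Real.exp (-a ^ 2 / s) * Real.exp (-(x - c * t) ^ 2 / s) := by
      funext x; ring_nf
    rw [h2] at this
    exact this.integrableOn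
  -- key tail estimate
  have key : (∫ x in Set.Ioi (c * t), Real.exp (-(x + ξ) ^ 2 / s))
      ≤ Real.exp (-a ^ 2 / s) * Real.sqrt (Real.pi * s) := by
    have step1 : (∫ x in Set.Ioi (c * t), Real.exp (-(x + ξ) ^ 2 / s))
        ≤ ∫ x in Set.Ioi (c * t), Real.exp (-a ^ 2 / s) * Real.exp (-(x - c * t) ^ 2 / s) := by
      apply setIntegral_mono_on hintL hintR measurableSet_Ioi
      intro x hx
      rw [Set.mem_Ioi] at hx
      rw [← Real.exp_add, Real.exp_le_exp]
      have h1 : x + ξ = (x - c * t) + a := by ring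
      rw [h1]
      rw [div_add_div _ _ (ne_of_gt hs) (ne_of_gt hs), div_le_div_iff₀ hs (by positivity)]
      nlinarith [sq_nonneg (x - c * t), mul_nonneg (sub_nonneg.mpr hx.le) ha.le, sq_nonneg s]
    have step2 : (∫ x in Set.Ioi (c * t), Real.exp (-a ^ 2 / s) * Real.exp (-(x - c * t) ^ 2 / s))
        ≤ Real.exp (-a ^ 2 / s) * Real.sqrt (Real.pi * s) := by
      rw [integral_const_mul]
      apply mul_le_mul_of_nonneg_left _ (Real.exp_nonneg _)
      have hfull : (∫ x : ℝ, Real.exp (-(x - c * t) ^ 2 / s)) = Real.sqrt (Real.pi * s) := by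
        have h2 : (fun x : ℝ => Real.exp (-(x - c * t) ^ 2 / s))
            = fun x => Real.exp (-(1/s) * (x - c * t) ^ 2) := by
          funext x; ring_nf
        rw [h2, integral_sub_right_eq_self (fun x => Real.exp (-(1/s) * x ^ 2)) (c * t),
          integral_gaussian]
        rw [one_div, div_inv_eq_mul]
      calc (∫ x in Set.Ioi (c * t), Real.exp (-(x - c * t) ^ 2 / s))
          ≤ ∫ x : ℝ, Real.exp (-(x - c * t) ^ 2 / s) := by
            apply setIntegral_le_integral
            · have := hint.comp_sub_right (c * t)
              have h2 : (fun x : ℝ => Real.exp (-(1/s) * (x - c * t) ^ 2))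
                  = fun x => Real.exp (-(x - c * t) ^ 2 / s) := by funext x; ring_nf
              rwa [h2] at this
            · filter_upwards with x using Real.exp_nonneg _
        _ = Real.sqrt (Real.pi * s) := hfull
    exact step1.trans step2
  -- rewrite the integral of G
  have hGint : (∫ x in Set.Ioi (c * t), G t (x + ξ))
      = (∫ x in Set.Ioi (c * t), Real.exp (-(x + ξ) ^ 2 / s)) / Real.sqrt (Real.pi * s) := by
    have hps : Real.pi * s = 4 * Real.pi * d * t := by rw [hs_def]; ring
    rw [hps]
    rw [← integral_div]
    apply setIntegral_congr_fun measurableSet_Ioi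
    intro x _
    simp only [hG]
    rfl
  rw [hGint]
  have hsp : 0 < Real.sqrt (Real.pi * s) := by positivity
  have hmain : Real.exp ((c / d) * ξ) * ((∫ x in Set.Ioi (c * t), Real.exp (-(x + ξ) ^ 2 / s)) / Real.sqrt (Real.pi * s))
      ≤ Real.exp ((c / d) * ξ) * Real.exp (-a ^ 2 / s) := by
    apply mul_le_mul_of_nonneg_left _ (Real.exp_nonneg _)
    rw [div_le_iff₀ hsp]
    calc _ ≤ Real.exp (-a ^ 2 / s) * Real.sqrt (Real.pi * s) := key
      _ = _ := by ring
  refine hmain.trans ?_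
  rw [← Real.exp_add, Real.exp_le_exp]
  -- exponent identity
  have hu : Real.sqrt t ^ 2 = t := Real.sq_sqrt ht.le
  have hv : Real.sqrt d ^ 2 = d := Real.sq_sqrt hd.le
  have hw : Real.sqrt (d * t) = Real.sqrt d * Real.sqrt t := Real.sqrt_mul hd.le t
  have hu' : 0 < Real.sqrt t := Real.sqrt_pos.mpr ht
  have hv' : 0 < Real.sqrt d := Real.sqrt_pos.mpr hd
  rw [hw, ha_def, hs_def]
  set u := Real.sqrt t with hu_def
  set v := Real.sqrt d with hv_def
  rw [le_iff_lt_or_eq]; right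
  rw [← hu, ← hv]
  field_simp
  ring
end

section
/- For any d > 0 and τ > 0, the convolution integral L(τ) := ∫₀^τ 1/((a + τ - s)·√s) ds with a := 1/(2β-1) > 0 (β ∈ (1/2,1]) satisfies L(τ) ≤ 2√2/√τ + √2·log(1 + (2β-1)τ/2)/√τ. -/
open Real intervalIntegral

/-- Bound on the convolution integral
`L(τ) = ∫₀^τ (a + τ - s)⁻¹ s^{-1/2} ds` with `a = 1/(2β-1)`. -/
theorem convolution_integral_bound (β : ℝ) (hβ : β ∈ Set.Ioc (1 / 2 : ℝ) 1)
    (τ : ℝ) (hτ : 0 < τ) :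
    (∫ s in (0 : ℝ)..τ, 1 / ((1 / (2 * β - 1) + τ - s) * Real.sqrt s))
      ≤ 2 * Real.sqrt 2 / Real.sqrt τ
        + Real.sqrt 2 * Real.log (1 + (2 * β - 1) * τ / 2) / Real.sqrt τ := by
  obtain ⟨hβ1, _⟩ := hβ
  have hb : 0 < 2 * β - 1 := by linarith
  set a : ℝ := 1 / (2 * β - 1) with ha_def
  have ha : 0 < a := by positivity
  set f : ℝ → ℝ := fun s => 1 / ((a + τ - s) * Real.sqrt s) with hf_def
  have hτ2 : 0 < τ / 2 := by linarith
  have hsτ : 0 < Real.sqrt τ := Real.sqrt_pos.2 hτ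
  have hs2 : 0 < Real.sqrt 2 := Real.sqrt_pos.2 (by norm_num)
  have hττ : Real.sqrt τ * Real.sqrt τ = τ := Real.mul_self_sqrt hτ.le
  have h22 : Real.sqrt 2 * Real.sqrt 2 = 2 := Real.mul_self_sqrt (by norm_num)
  -- integrability on [0, τ]
  have hmeas : Measurable f := by
    apply Measurable.div measurable_const
    exact (measurable_const.sub measurable_id).mul Real.continuous_sqrt.measurable
  have hint : IntervalIntegrable f MeasureTheory.volume 0 τ := by
    have hg : IntervalIntegrable (fun s : ℝ => a⁻¹ * s ^ (-(1/2) : ℝ))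
        MeasureTheory.volume 0 τ :=
      (intervalIntegral.intervalIntegrable_rpow' (by norm_num)).const_mul _
    refine hg.mono_fun hmeas.aestronglyMeasurable ?_
    rw [Set.uIoc_of_le hτ.le]
    filter_upwards [MeasureTheory.ae_restrict_mem measurableSet_Ioc] with s hs
    obtain ⟨hs0, hsτ'⟩ := hs
    have hss : 0 < Real.sqrt s := Real.sqrt_pos.2 hs0
    have hden : 0 < a + τ - s := by linarith
    rw [Real.norm_eq_abs, Real.norm_eq_abs,
      abs_of_nonneg (by simp only [hf_def]; positivity),
      abs_of_nonneg (by positivity)]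
    simp only [hf_def]
    rw [Real.rpow_neg hs0.le, ← Real.sqrt_eq_rpow, one_div, mul_inv]
    gcongr
    linarith
  have hint1 : IntervalIntegrable f MeasureTheory.volume 0 (τ/2) := by
    apply hint.mono_set
    rw [Set.uIcc_of_le hτ2.le, Set.uIcc_of_le hτ.le]
    exact Set.Icc_subset_Icc le_rfl (by linarith)
  have hint2 : IntervalIntegrable f MeasureTheory.volume (τ/2) τ := by
    apply hint.mono_set
    rw [Set.uIcc_of_le (by linarith : τ/2 ≤ τ), Set.uIcc_of_le hτ.le]
    exact Set.Icc_subset_Icc hτ2.le le_rfl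
  -- part 1
  have hg1 : IntervalIntegrable (fun s : ℝ => (2/τ) * s ^ (-(1/2) : ℝ))
      MeasureTheory.volume 0 (τ/2) :=
    (intervalIntegral.intervalIntegrable_rpow' (by norm_num)).const_mul _
  have h1 : (∫ s in (0:ℝ)..(τ/2), f s) ≤ ∫ s in (0:ℝ)..(τ/2), (2/τ) * s ^ (-(1/2):ℝ) := by
    apply intervalIntegral.integral_mono_on hτ2.le hint1 hg1
    intro s hs
    rcases eq_or_lt_of_le hs.1 with h0 | h0
    · simp [hf_def, ← h0, Real.zero_rpow (by norm_num : (-(1/2):ℝ) ≠ 0)]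
    · have hss : 0 < Real.sqrt s := Real.sqrt_pos.2 h0
      simp only [hf_def]
      rw [Real.rpow_neg h0.le, ← Real.sqrt_eq_rpow, one_div, mul_inv,
        show (2/τ) = (τ/2)⁻¹ by rw [inv_div]]
      gcongr
      linarith [hs.2]
  have e1 : (∫ s in (0:ℝ)..(τ/2), (2/τ) * s ^ (-(1/2):ℝ)) = 2 * Real.sqrt 2 / Real.sqrt τ := by
    rw [intervalIntegral.integral_const_mul, integral_rpow (Or.inl (by norm_num))]
    rw [show (-(1/2:ℝ) + 1) = (1/2:ℝ) by norm_num, Real.zero_rpow (by norm_num),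
      ← Real.sqrt_eq_rpow, Real.sqrt_div hτ.le]
    field_simp
    linear_combination 2 * hττ - τ * h22
  -- part 2
  have hg2 : IntervalIntegrable (fun s : ℝ => (Real.sqrt 2 / Real.sqrt τ) * (a + τ - s)⁻¹)
      MeasureTheory.volume (τ/2) τ := by
    apply ContinuousOn.intervalIntegrable
    apply continuousOn_const.mul
    apply ContinuousOn.inv₀ ((continuousOn_const.sub continuousOn_id))
    intro s hs
    rw [Set.uIcc_of_le (by linarith : τ/2 ≤ τ)] at hs
    have := hs.2
    intro hc
    simp only [Pi.sub_apply, id] at hc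
    linarith
  have h2 : (∫ s in (τ/2:ℝ)..τ, f s)
      ≤ ∫ s in (τ/2:ℝ)..τ, (Real.sqrt 2 / Real.sqrt τ) * (a + τ - s)⁻¹ := by
    apply intervalIntegral.integral_mono_on (by linarith : τ/2 ≤ τ) hint2 hg2
    intro s hs
    have hss : 0 < Real.sqrt s := Real.sqrt_pos.2 (by linarith [hs.1])
    have hden : 0 < a + τ - s := by linarith [hs.2]
    have hst2 : 0 < Real.sqrt (τ/2) := Real.sqrt_pos.2 hτ2
    have key : (Real.sqrt (τ/2))⁻¹ = Real.sqrt 2 / Real.sqrt τ := by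
      rw [Real.sqrt_div hτ.le, inv_div]
    simp only [hf_def]
    rw [one_div, mul_inv, ← key, mul_comm]
    gcongr
    exact hs.1
  have e2 : (∫ s in (τ/2:ℝ)..τ, (Real.sqrt 2 / Real.sqrt τ) * (a + τ - s)⁻¹)
      = Real.sqrt 2 * Real.log (1 + (2*β-1)*τ/2) / Real.sqrt τ := by
    rw [intervalIntegral.integral_const_mul]
    have hsub := intervalIntegral.integral_comp_sub_left (a := τ/2) (b := τ)
      (fun u : ℝ => u⁻¹) (a + τ)
    rw [hsub, show a + τ - τ = a by ring, show a + τ - τ/2 = a + τ/2 by ring,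
      integral_inv (by
        rw [Set.uIcc_of_le (by linarith : a ≤ a + τ/2), Set.mem_Icc]
        push_neg
        intro h; linarith)]
    rw [show (a + τ/2)/a = 1 + (2*β-1)*τ/2 by
      rw [ha_def]; field_simp]
    ring
  have hsplit : (∫ s in (0:ℝ)..τ, f s)
      = (∫ s in (0:ℝ)..(τ/2), f s) + ∫ s in (τ/2:ℝ)..τ, f s :=
    (intervalIntegral.integral_add_adjacent_intervals hint1 hint2).symm
  calc (∫ s in (0:ℝ)..τ, f s)
      = (∫ s in (0:ℝ)..(τ/2), f s) + ∫ s in (τ/2:ℝ)..τ, f s := hsplit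
    _ ≤ (∫ s in (0:ℝ)..(τ/2), (2/τ) * s ^ (-(1/2):ℝ))
        + ∫ s in (τ/2:ℝ)..τ, (Real.sqrt 2 / Real.sqrt τ) * (a + τ - s)⁻¹ := add_le_add h1 h2
    _ = 2 * Real.sqrt 2 / Real.sqrt τ
        + Real.sqrt 2 * Real.log (1 + (2 * β - 1) * τ / 2) / Real.sqrt τ := by rw [e1, e2]
end

section
/- Let d > 0, c > 0, β > 0, s > 0. Define K(s,ξ) := ∫₀^∞ [|y + cβs - ξ|·exp(-(y+cβs-ξ)²/(4ds)) + (y + cβs + ξ)·exp(-(y+cβs+ξ)²/(4ds))·e^{(cβ/d)ξ}] dy. Then K(s,ξ) ≤ 6ds for every ξ ≥ 0. -/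
open Real MeasureTheory

open Set Filter Topology in
private lemma kib_hasDerivAt (D t : ℝ) (hD : 0 < D) (y : ℝ) :
    HasDerivAt (fun y : ℝ => -(D / 2) * Real.exp (-(y + t) ^ 2 / D))
      ((y + t) * Real.exp (-(y + t) ^ 2 / D)) y := by
  have h1 : HasDerivAt (fun y : ℝ => -(y + t) ^ 2 / D) (-(2 * (y + t)) / D) y := by
    have := (((hasDerivAt_id y).add_const t).pow 2).neg.div_const D
    simpa [mul_comm] using this
  have h2 := h1.exp
  have h3 := h2.const_mul (-(D / 2))
  have key : ∀ e : ℝ, -(D / 2) * (e * (-(2 * (y + t)) / D)) = (y + t) * e := by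
    intro e
    rw [mul_comm e, ← mul_assoc, show -(D / 2) * (-(2 * (y + t)) / D) = (y + t) * (D / D) by ring,
      div_self hD.ne', mul_one]
  rw [key] at h3
  exact h3

open Set Filter Topology in
private lemma kib_tendsto (D t : ℝ) (hD : 0 < D) :
    Tendsto (fun y : ℝ => -(D / 2) * Real.exp (-(y + t) ^ 2 / D)) atTop (𝓝 0) := by
  have h1 : Tendsto (fun y : ℝ => -(y + t) ^ 2 / D) atTop atBot := by
    apply Tendsto.atBot_div_const hD
    apply Filter.tendsto_neg_atBot_iff.mpr
    exact (tendsto_pow_atTop (two_ne_zero)).comp (tendsto_atTop_add_const_right _ t tendsto_id)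
  have h2 := Real.tendsto_exp_atBot.comp h1
  have := h2.const_mul (-(D / 2))
  simpa using this

open Set Filter Topology in
private lemma kib_integrableOn (D t a : ℝ) (hD : 0 < D) (hat : 0 ≤ a + t) :
    IntegrableOn (fun y : ℝ => (y + t) * Real.exp (-(y + t) ^ 2 / D)) (Ioi a) :=
  integrableOn_Ioi_deriv_of_nonneg' (fun y _ => kib_hasDerivAt D t hD y)
    (fun y hy => mul_nonneg (by have := hy.out; linarith) (Real.exp_nonneg _))
    (kib_tendsto D t hD)

open Set Filter Topology in
private lemma kib_integral (D t a : ℝ) (hD : 0 < D) (hat : 0 ≤ a + t) :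
    ∫ y in Ioi a, (y + t) * Real.exp (-(y + t) ^ 2 / D)
      = D / 2 * Real.exp (-(a + t) ^ 2 / D) := by
  rw [integral_Ioi_of_hasDerivAt_of_nonneg' (fun y _ => kib_hasDerivAt D t hD y)
    (fun y hy => mul_nonneg (by have := hy.out; linarith) (Real.exp_nonneg _))
    (kib_tendsto D t hD)]
  ring

/-- Bound `K(s,ξ) ≤ 6ds` on the kernel integral arising in the Duhamel estimate. -/
theorem kernel_integral_bound (d c β s : ℝ)
    (hd : 0 < d) (hc : 0 < c) (hβ : 0 < β) (hs : 0 < s) :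
    ∀ ξ ≥ (0 : ℝ),
      (∫ y in Set.Ioi (0 : ℝ),
        (|y + c * β * s - ξ| * Real.exp (-(y + c * β * s - ξ) ^ 2 / (4 * d * s))
          + (y + c * β * s + ξ) * Real.exp (-(y + c * β * s + ξ) ^ 2 / (4 * d * s))
            * Real.exp ((c * β / d) * ξ)))
      ≤ 6 * d * s := by
  intro ξ hξ
  set D : ℝ := 4 * d * s with hDdef
  have hD : 0 < D := by positivity
  set b : ℝ := c * β * s - ξ with hbdef
  set m : ℝ := c * β * s + ξ with hmdef
  have hm : 0 ≤ m := by
    have h0 : 0 < c * β * s := by positivity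
    simp only [hmdef]; linarith
  set E : ℝ := Real.exp ((c * β / d) * ξ) with hEdef
  set f₁ : ℝ → ℝ := fun y => |y + b| * Real.exp (-(y + b) ^ 2 / D) with hf₁
  set f₂ : ℝ → ℝ := fun y => (y + m) * Real.exp (-(y + m) ^ 2 / D) * E with hf₂
  have heq : ∀ y ∈ Set.Ioi (0 : ℝ),
      |y + c * β * s - ξ| * Real.exp (-(y + c * β * s - ξ) ^ 2 / (4 * d * s))
        + (y + c * β * s + ξ) * Real.exp (-(y + c * β * s + ξ) ^ 2 / (4 * d * s))
          * Real.exp ((c * β / d) * ξ) = f₁ y + f₂ y := by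
    intro y _
    have e1 : y + c * β * s - ξ = y + b := by rw [hbdef]; ring
    have e2 : y + c * β * s + ξ = y + m := by rw [hmdef]; ring
    rw [e1, e2, hf₁, hf₂, hDdef, hEdef]
  rw [setIntegral_congr_fun measurableSet_Ioi heq]
  -- integrability of the pieces
  have hint₂ : IntegrableOn f₂ (Set.Ioi (0 : ℝ)) := by
    exact (kib_integrableOn D m 0 hD (by linarith)).mul_const E
  have hint₁ : IntegrableOn f₁ (Set.Ioi (0 : ℝ)) := by
    by_cases hb : 0 ≤ b
    · apply (kib_integrableOn D b 0 hD (by linarith)).congr_fun _ measurableSet_Ioi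
      intro y hy
      have : (0 : ℝ) < y + b := by have := hy.out; linarith
      simp only [hf₁]
      rw [abs_of_pos this]
    · push_neg at hb
      have h0b : (0 : ℝ) ≤ -b := by linarith
      have hBU : Set.Ioc (0 : ℝ) (-b) ∪ Set.Ioi (-b) = Set.Ioi (0 : ℝ) :=
        Set.Ioc_union_Ioi_eq_Ioi h0b
      rw [← hBU]
      apply IntegrableOn.union
      · apply Continuous.integrableOn_Ioc
        fun_prop
      · apply (kib_integrableOn D b (-b) hD (by linarith)).congr_fun _ measurableSet_Ioi
        intro y hy
        have : (0 : ℝ) < y + b := by have := hy.out; linarith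
        simp only [hf₁]
        rw [abs_of_pos this]
  rw [MeasureTheory.integral_add hint₁ hint₂]
  -- bound the second integral
  have I₂ : ∫ y in Set.Ioi (0 : ℝ), f₂ y ≤ D / 2 := by
    have := kib_integral D m 0 hD (by linarith)
    simp only [hf₂]
    rw [MeasureTheory.integral_mul_const E, this]
    have hexp : Real.exp (-(0 + m) ^ 2 / D) * E ≤ 1 := by
      rw [hEdef, ← Real.exp_add]
      apply Real.exp_le_one_iff.mpr
      have hkey : 4 * (c * β * s) * ξ ≤ m ^ 2 := by nlinarith [sq_nonneg (c * β * s - ξ)]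
      have h1 : c * β / d * ξ = (4 * (c * β * s) * ξ) / D := by
        rw [hDdef]; field_simp
      rw [h1, zero_add, neg_div, ← sub_eq_neg_add, div_sub_div_same]
      apply div_nonpos_of_nonpos_of_nonneg _ hD.le
      linarith
    calc D / 2 * Real.exp (-(0 + m) ^ 2 / D) * E
        = D / 2 * (Real.exp (-(0 + m) ^ 2 / D) * E) := by ring
      _ ≤ D / 2 * 1 := by
          apply mul_le_mul_of_nonneg_left hexp (by positivity)
      _ = D / 2 := by ring
  -- bound the first integral
  have I₁ : ∫ y in Set.Ioi (0 : ℝ), f₁ y ≤ D := by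
    by_cases hb : 0 ≤ b
    · have hcg : ∀ y ∈ Set.Ioi (0 : ℝ), f₁ y = (y + b) * Real.exp (-(y + b) ^ 2 / D) := by
        intro y hy
        have : (0 : ℝ) < y + b := by have := hy.out; linarith
        simp only [hf₁]
        rw [abs_of_pos this]
      rw [setIntegral_congr_fun measurableSet_Ioi hcg, kib_integral D b 0 hD (by linarith)]
      have h1 : Real.exp (-(0 + b) ^ 2 / D) ≤ 1 := by
        apply Real.exp_le_one_iff.mpr
        apply div_nonpos_of_nonpos_of_nonneg _ hD.le
        nlinarith [sq_nonneg (0 + b)]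
      nlinarith [hD]
    · push_neg at hb
      have h0b : (0 : ℝ) ≤ -b := by linarith
      have hBU : Set.Ioc (0 : ℝ) (-b) ∪ Set.Ioi (-b) = Set.Ioi (0 : ℝ) :=
        Set.Ioc_union_Ioi_eq_Ioi h0b
      have hintL : IntegrableOn f₁ (Set.Ioc (0 : ℝ) (-b)) := by
        apply Continuous.integrableOn_Ioc
        fun_prop
      have hintR : IntegrableOn f₁ (Set.Ioi (-b)) := by
        apply (kib_integrableOn D b (-b) hD (by linarith)).congr_fun _ measurableSet_Ioi
        intro y hy
        have : (0 : ℝ) < y + b := by have := hy.out; linarith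
        simp only [hf₁]
        rw [abs_of_pos this]
      rw [← hBU, setIntegral_union (Set.Ioc_disjoint_Ioi le_rfl) measurableSet_Ioi hintL hintR]
      have hL : ∫ y in Set.Ioc (0 : ℝ) (-b), f₁ y ≤ D / 2 := by
        have hcg : ∀ y ∈ Set.Ioc (0 : ℝ) (-b),
            f₁ y = -((y + b) * Real.exp (-(y + b) ^ 2 / D)) := by
          intro y hy
          have : y + b ≤ 0 := by have := hy.2; linarith
          simp only [hf₁]
          rw [abs_of_nonpos this]
          ring
        rw [setIntegral_congr_fun measurableSet_Ioc hcg,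
          ← intervalIntegral.integral_of_le h0b]
        have hftc : ∫ y in (0 : ℝ)..(-b),
            -((y + b) * Real.exp (-(y + b) ^ 2 / D))
            = (D / 2 * Real.exp (-(-b + b) ^ 2 / D)) - (D / 2 * Real.exp (-(0 + b) ^ 2 / D)) := by
          apply intervalIntegral.integral_eq_sub_of_hasDerivAt
            (f := fun y => D / 2 * Real.exp (-(y + b) ^ 2 / D))
          · intro y _
            convert (kib_hasDerivAt D b hD y).neg using 1
            funext z
            simp
          · apply Continuous.intervalIntegrable
            fun_prop
        rw [hftc]
        have h1 : Real.exp (-(-b + b) ^ 2 / D) ≤ 1 := by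
          apply Real.exp_le_one_iff.mpr
          apply div_nonpos_of_nonpos_of_nonneg _ hD.le
          nlinarith [sq_nonneg (-b + b)]
        have h2 : 0 < Real.exp (-(0 + b) ^ 2 / D) := Real.exp_pos _
        nlinarith [hD]
      have hR : ∫ y in Set.Ioi (-b), f₁ y ≤ D / 2 := by
        have hcg : ∀ y ∈ Set.Ioi (-b), f₁ y = (y + b) * Real.exp (-(y + b) ^ 2 / D) := by
          intro y hy
          have : (0 : ℝ) < y + b := by have := hy.out; linarith
          simp only [hf₁]
          rw [abs_of_pos this]
        rw [setIntegral_congr_fun measurableSet_Ioi hcg,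
          kib_integral D b (-b) hD (by linarith)]
        have h1 : Real.exp (-(-b + b) ^ 2 / D) ≤ 1 := by
          apply Real.exp_le_one_iff.mpr
          apply div_nonpos_of_nonpos_of_nonneg _ hD.le
          nlinarith [sq_nonneg (-b + b)]
        nlinarith [hD]
      linarith
  have : D + D / 2 = 6 * d * s := by rw [hDdef]; ring
  linarith
end

section
/- Let d > 0, β ∈ (0, 1/2), c > 0, and ψ(τ) := 2cβ·e^{(2β-1)τ}. The function w̄(τ,y) := exp(-y²/(4d) - ψ(τ)y/(2d)) is a supersolution of the rescaled Fokker–Planck problem: ∂_τ w̄ - 2d·∂_{yy}w̄ - ∂_y((y + ψ(τ))w̄) = (cβ(1-2β)/d)·e^{(2β-1)τ}·y·w̄ ≥ 0 for all τ > 0, y > 0, and the boundary identity -2d·∂_y w̄(τ,0) = ψ(τ)·w̄(τ,0) holds for all τ > 0. -/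
open Real

private lemma deriv_y (d p : ℝ) (z : ℝ) :
    HasDerivAt (fun z : ℝ => Real.exp (-z ^ 2 / (4 * d) - p * z / (2 * d)))
      ((-(z + p) / (2 * d)) * Real.exp (-z ^ 2 / (4 * d) - p * z / (2 * d))) z := by
  have h2 : HasDerivAt (fun z : ℝ => -z ^ 2 / (4 * d)) (-(2 * z) / (4 * d)) z := by
    simpa using ((hasDerivAt_pow 2 z).neg.div_const (4 * d))
  have h3 : HasDerivAt (fun z : ℝ => p * z / (2 * d)) (p / (2 * d)) z := by
    simpa using (((hasDerivAt_id z).const_mul p).div_const (2 * d))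
  have h1 : HasDerivAt (fun z : ℝ => -z ^ 2 / (4 * d) - p * z / (2 * d))
      (-(z + p) / (2 * d)) z := by
    refine (h2.fun_sub h3).congr_deriv ?_
    by_cases hd : d = 0
    · simp [hd]
    · field_simp; ring
  simpa [mul_comm] using h1.exp

/-- `w̄(τ,y) = exp(-y²/(4d) - ψ(τ)y/(2d))` is a supersolution of the rescaled
Fokker–Planck problem for `β ∈ (0,1/2)`, with exact boundary identity. -/
theorem supersolution_subcritical (d c β : ℝ)
    (hd : 0 < d) (hc : 0 < c) (hβ : β ∈ Set.Ioo (0 : ℝ) (1 / 2))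
    (ψ : ℝ → ℝ) (hψ : ∀ τ, ψ τ = 2 * c * β * Real.exp ((2 * β - 1) * τ))
    (w : ℝ → ℝ → ℝ)
    (hw : ∀ τ y, w τ y = Real.exp (-y ^ 2 / (4 * d) - ψ τ * y / (2 * d))) :
    (∀ τ > (0 : ℝ), ∀ y > (0 : ℝ),
      deriv (fun σ => w σ y) τ - 2 * d * deriv (deriv (fun z => w τ z)) y
        - deriv (fun z => (z + ψ τ) * w τ z) y
        = (c * β * (1 - 2 * β) / d) * Real.exp ((2 * β - 1) * τ) * y * w τ y ∧
      0 ≤ (c * β * (1 - 2 * β) / d) * Real.exp ((2 * β - 1) * τ) * y * w τ y) ∧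
    (∀ τ > (0 : ℝ), -(2 * d * deriv (fun z => w τ z) 0) = ψ τ * w τ 0) := by
  obtain ⟨hβ0, hβ2⟩ := hβ
  have hd0 : d ≠ 0 := ne_of_gt hd
  have hwfun : ∀ τ, (fun z => w τ z)
      = fun z : ℝ => Real.exp (-z ^ 2 / (4 * d) - ψ τ * z / (2 * d)) :=
    fun τ => funext fun z => hw τ z
  have hderiv1 : ∀ τ, deriv (fun z => w τ z)
      = fun z : ℝ => (-(z + ψ τ) / (2 * d)) *
          Real.exp (-z ^ 2 / (4 * d) - ψ τ * z / (2 * d)) := by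
    intro τ
    rw [hwfun τ]
    exact funext fun z => (deriv_y d (ψ τ) z).deriv
  constructor
  · intro τ hτ y hy
    -- τ derivative
    have hτderiv : deriv (fun σ => w σ y) τ
        = -(Real.exp ((2 * β - 1) * τ) * (2 * β - 1) * (2 * c * β) * y / (2 * d))
          * Real.exp (-y ^ 2 / (4 * d) - ψ τ * y / (2 * d)) := by
      have hfun : (fun σ => w σ y) = fun σ : ℝ =>
          Real.exp (-y ^ 2 / (4 * d) - 2 * c * β * Real.exp ((2 * β - 1) * σ) * y / (2 * d)) := by
        funext σ; rw [hw, hψ]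
      rw [hfun]
      have hexp : HasDerivAt (fun σ : ℝ => Real.exp ((2 * β - 1) * σ))
          (Real.exp ((2 * β - 1) * τ) * (2 * β - 1)) τ := by
        simpa [mul_comm] using ((hasDerivAt_id τ).const_mul (2 * β - 1)).exp
      have hinner : HasDerivAt (fun σ : ℝ =>
          -y ^ 2 / (4 * d) - 2 * c * β * Real.exp ((2 * β - 1) * σ) * y / (2 * d))
          (-(2 * c * β * (Real.exp ((2 * β - 1) * τ) * (2 * β - 1)) * y / (2 * d))) τ := by
        have h4 : HasDerivAt (fun σ : ℝ => 2 * c * β * Real.exp ((2 * β - 1) * σ) * y / (2 * d))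
            (2 * c * β * (Real.exp ((2 * β - 1) * τ) * (2 * β - 1)) * y / (2 * d)) τ := by
          exact ((hexp.const_mul (2 * c * β)).mul_const y).div_const (2 * d)
        simpa using (hasDerivAt_const τ (-y ^ 2 / (4 * d))).fun_sub h4
      rw [hinner.exp.deriv, hψ]
      ring
    -- second y derivative
    have h2nd : deriv (deriv (fun z => w τ z)) y
        = ((-1 / (2 * d)) + (-(y + ψ τ) / (2 * d)) * (-(y + ψ τ) / (2 * d)))
            * Real.exp (-y ^ 2 / (4 * d) - ψ τ * y / (2 * d)) := by
      rw [hderiv1 τ]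
      have hlin : HasDerivAt (fun z : ℝ => -(z + ψ τ) / (2 * d)) (-1 / (2 * d)) y := by
        simpa using (((hasDerivAt_id y).add_const (ψ τ)).neg.div_const (2 * d))
      rw [(hlin.fun_mul (deriv_y d (ψ τ) y)).deriv]
      ring
    -- derivative of (z + ψ τ) * w
    have hprod : deriv (fun z => (z + ψ τ) * w τ z) y
        = (1 + (y + ψ τ) * (-(y + ψ τ) / (2 * d)))
            * Real.exp (-y ^ 2 / (4 * d) - ψ τ * y / (2 * d)) := by
      have heq : (fun z => (z + ψ τ) * w τ z) = fun z : ℝ =>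
          (z + ψ τ) * Real.exp (-z ^ 2 / (4 * d) - ψ τ * z / (2 * d)) := by
        funext z; rw [hw]
      rw [heq]
      have hlin : HasDerivAt (fun z : ℝ => z + ψ τ) 1 y := (hasDerivAt_id y).add_const (ψ τ)
      rw [(hlin.fun_mul (deriv_y d (ψ τ) y)).deriv]
      ring
    refine ⟨?_, ?_⟩
    · rw [hτderiv, h2nd, hprod, hw τ y, hψ]
      field_simp
      ring
    · have h1 : (0 : ℝ) ≤ c * β * (1 - 2 * β) / d := by
        apply div_nonneg _ (le_of_lt hd)
        have : 0 < 1 - 2 * β := by linarith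
        positivity
      have h2 : 0 < w τ y := by rw [hw]; positivity
      positivity
  · intro τ hτ
    rw [hderiv1 τ, hw τ 0]
    field_simp
    ring
end

section
/- Let d > 0, c > 0, β ∈ (1/2, 1], η(τ) := (β-1)/(1 + (2β-1)τ), and λ > 0. The function w̄(τ,y) := λ·exp(-(cβ/d)y + η(τ)y²/(2d)) satisfies ∂_τ w̄ - d·∂_{yy}w̄ - ∂_y((cβ - η(τ)y)w̄) = (y²η'(τ)/(2d))·w̄ ≥ 0 for all τ > 0, y > 0, and -d·∂_y w̄(τ,0) - cβ·w̄(τ,0) = 0 for all τ > 0. Moreover, since η(τ) ≤ 0, ∫₀^∞ ξ·w̄(τ,ξ) dξ ≤ λ·∫₀^∞ ξ·e^{-(cβ/d)ξ} dξ = λd²/(c²β²) for every τ ≥ 0. -/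
open Real MeasureTheory

/-- `w̄(τ,y) = λ·exp(-(cβ/d)y + η(τ)y²/(2d))` is a supersolution of the
super-critical rescaled problem, and its first moment is uniformly bounded by
`λd²/(c²β²)`. -/
theorem supersolution_supercritical (d c β lam : ℝ)
    (hd : 0 < d) (hc : 0 < c) (hβ : β ∈ Set.Ioc (1 / 2 : ℝ) 1) (hlam : 0 < lam)
    (η : ℝ → ℝ) (hη : ∀ τ, η τ = (β - 1) / (1 + (2 * β - 1) * τ))
    (w : ℝ → ℝ → ℝ)
    (hw : ∀ τ y, w τ y = lam * Real.exp (-(c * β / d) * y + η τ * y ^ 2 / (2 * d))) :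
    (∀ τ > (0 : ℝ), ∀ y > (0 : ℝ),
      deriv (fun σ => w σ y) τ - d * deriv (deriv (fun z => w τ z)) y
        - deriv (fun z => (c * β - η τ * z) * w τ z) y
        = (y ^ 2 * deriv η τ / (2 * d)) * w τ y ∧
      0 ≤ (y ^ 2 * deriv η τ / (2 * d)) * w τ y) ∧
    (∀ τ > (0 : ℝ), -(d * deriv (fun z => w τ z) 0) - c * β * w τ 0 = 0) ∧
    (∀ τ ≥ (0 : ℝ),
      (∫ ξ in Set.Ioi (0 : ℝ), ξ * w τ ξ)
        ≤ lam * ∫ ξ in Set.Ioi (0 : ℝ), ξ * Real.exp (-(c * β / d) * ξ)) ∧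
    (lam * ∫ ξ in Set.Ioi (0 : ℝ), ξ * Real.exp (-(c * β / d) * ξ))
      = lam * d ^ 2 / (c ^ 2 * β ^ 2) := by
  obtain ⟨hβ1, hβ2⟩ := hβ
  have hb : 0 < 2 * β - 1 := by linarith
  have hβ0 : 0 < β := by linarith
  have hd' : d ≠ 0 := hd.ne'
  have hηfun : η = fun τ => (β - 1) / (1 + (2 * β - 1) * τ) := funext hη
  -- denominator positivity
  have hD : ∀ τ : ℝ, 0 ≤ τ → 0 < 1 + (2 * β - 1) * τ := fun τ hτ => by nlinarith
  -- derivative of η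
  have hηderiv : ∀ τ : ℝ, 0 < τ →
      HasDerivAt η ((1 - β) * (2 * β - 1) / (1 + (2 * β - 1) * τ) ^ 2) τ := by
    intro τ hτ
    have hDτ := hD τ hτ.le
    have h1 : HasDerivAt (fun σ : ℝ => 1 + (2 * β - 1) * σ) (2 * β - 1) τ := by
      exact (((hasDerivAt_id' τ).const_mul (2 * β - 1)).const_add 1).congr_deriv (mul_one _)
    have h2 : HasDerivAt (fun σ : ℝ => (β - 1) / (1 + (2 * β - 1) * σ))
        ((0 * (1 + (2 * β - 1) * τ) - (β - 1) * (2 * β - 1)) / (1 + (2 * β - 1) * τ) ^ 2) τ :=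
      (hasDerivAt_const τ (β - 1)).div h1 hDτ.ne'
    rw [hηfun]
    convert h2 using 1
    ring
  -- spatial derivative of w τ ·
  have hwz : ∀ τ y : ℝ,
      HasDerivAt (fun z => w τ z) (w τ y * (-(c * β / d) + η τ * y / d)) y := by
    intro τ y
    have hwf : (fun z => w τ z)
        = fun z => lam * Real.exp (-(c * β / d) * z + η τ * z ^ 2 / (2 * d)) :=
      funext (hw τ)
    have he : HasDerivAt (fun z : ℝ => -(c * β / d) * z + η τ * z ^ 2 / (2 * d))
        (-(c * β / d) + η τ * y / d) y := by
      have h1 : HasDerivAt (fun z : ℝ => -(c * β / d) * z) (-(c * β / d)) y := by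
        simpa using (hasDerivAt_id y).const_mul (-(c * β / d))
      have h2 : HasDerivAt (fun z : ℝ => η τ * z ^ 2 / (2 * d)) (η τ * (2 * y) / (2 * d)) y := by
        have := ((hasDerivAt_pow 2 y).const_mul (η τ)).div_const (2 * d)
        simpa using this
      have := h1.add h2
      exact this.congr_deriv (by ring)
    rw [hwf, hw]
    simpa [mul_assoc, mul_comm, mul_left_comm] using (he.exp.const_mul lam)
  -- part 1
  refine ⟨?_, ?_, ?_, ?_⟩
  · intro τ hτ y hy
    have hηd := hηderiv τ hτ
    have hwpos : 0 < w τ y := by rw [hw]; positivity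
    -- time derivative
    have htime : HasDerivAt (fun σ => w σ y)
        (w τ y * ((1 - β) * (2 * β - 1) / (1 + (2 * β - 1) * τ) ^ 2 * y ^ 2 / (2 * d))) τ := by
      have hwf : (fun σ => w σ y)
          = fun σ => lam * Real.exp (-(c * β / d) * y + η σ * y ^ 2 / (2 * d)) :=
        funext fun σ => hw σ y
      have he : HasDerivAt (fun σ : ℝ => -(c * β / d) * y + η σ * y ^ 2 / (2 * d))
          ((1 - β) * (2 * β - 1) / (1 + (2 * β - 1) * τ) ^ 2 * y ^ 2 / (2 * d)) τ := by
        have := ((hηd.mul_const (y ^ 2)).div_const (2 * d)).const_add (-(c * β / d) * y)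
        simpa using this
      rw [hwf, hw]
      simpa [mul_assoc, mul_comm, mul_left_comm] using (he.exp.const_mul lam)
    -- first spatial derivative as a function
    have hderiv1 : deriv (fun z => w τ z)
        = fun z => w τ z * (-(c * β / d) + η τ * z / d) := by
      funext z
      exact (hwz τ z).deriv
    -- second spatial derivative
    have h2nd : HasDerivAt (deriv (fun z => w τ z))
        (w τ y * (-(c * β / d) + η τ * y / d) * (-(c * β / d) + η τ * y / d)
          + w τ y * (η τ / d)) y := by
      rw [hderiv1]
      have hlin : HasDerivAt (fun z : ℝ => -(c * β / d) + η τ * z / d) (η τ / d) y := by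
        have := (((hasDerivAt_id y).const_mul (η τ)).div_const d).const_add (-(c * β / d))
        simpa using this
      exact (hwz τ y).mul hlin
    -- derivative of the flux term
    have hflux : HasDerivAt (fun z => (c * β - η τ * z) * w τ z)
        ((-(η τ)) * w τ y + (c * β - η τ * y) * (w τ y * (-(c * β / d) + η τ * y / d))) y := by
      have hlin : HasDerivAt (fun z : ℝ => c * β - η τ * z) (-(η τ)) y := by
        have := ((hasDerivAt_id' y).const_mul (η τ)).const_sub (c * β)
        exact this.congr_deriv (by ring)
      exact hlin.mul (hwz τ y)
    have hηval : deriv η τ = (1 - β) * (2 * β - 1) / (1 + (2 * β - 1) * τ) ^ 2 := hηd.deriv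
    constructor
    · rw [htime.deriv, h2nd.deriv, hflux.deriv, hηval]
      field_simp
      ring
    · rw [hηval]
      have h1 : 0 ≤ (1 - β) * (2 * β - 1) := by nlinarith
      have h2 : (0:ℝ) < (1 + (2 * β - 1) * τ) ^ 2 := by positivity
      positivity
  -- boundary condition
  · intro τ hτ
    have := (hwz τ 0).deriv
    rw [this]
    field_simp
    ring
  -- moment bound
  · intro τ hτ
    have hr : 0 < c * β / d := by positivity
    have hηle : η τ ≤ 0 := by
      rw [hη]
      apply div_nonpos_of_nonpos_of_nonneg (by linarith) (hD τ hτ).le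
    have hgint : IntegrableOn (fun ξ : ℝ => lam * (ξ * Real.exp (-(c * β / d) * ξ)))
        (Set.Ioi 0) := by
      have h := integrableOn_rpow_mul_exp_neg_mul_rpow (p := 1) (s := 1) (b := c * β / d)
        (by norm_num) (by norm_num) hr
      have h2 : IntegrableOn (fun ξ : ℝ => ξ * Real.exp (-(c * β / d) * ξ)) (Set.Ioi 0) := by
        refine h.congr_fun (fun x hx => ?_) measurableSet_Ioi
        norm_num
      exact h2.const_mul lam
    have hbound : ∀ ξ ∈ Set.Ioi (0:ℝ),
        ξ * w τ ξ ≤ lam * (ξ * Real.exp (-(c * β / d) * ξ)) := by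
      intro ξ hξ
      have hξ0 : 0 < ξ := hξ
      rw [hw]
      have hexp : Real.exp (-(c * β / d) * ξ + η τ * ξ ^ 2 / (2 * d))
          ≤ Real.exp (-(c * β / d) * ξ) := by
        apply Real.exp_le_exp.mpr
        have : η τ * ξ ^ 2 / (2 * d) ≤ 0 := by
          apply div_nonpos_of_nonpos_of_nonneg
          · exact mul_nonpos_of_nonpos_of_nonneg hηle (by positivity)
          · positivity
        linarith
      calc ξ * (lam * Real.exp (-(c * β / d) * ξ + η τ * ξ ^ 2 / (2 * d)))
          ≤ ξ * (lam * Real.exp (-(c * β / d) * ξ)) := by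
            apply mul_le_mul_of_nonneg_left _ hξ0.le
            exact mul_le_mul_of_nonneg_left hexp hlam.le
        _ = lam * (ξ * Real.exp (-(c * β / d) * ξ)) := by ring
    have hfint : IntegrableOn (fun ξ : ℝ => ξ * w τ ξ) (Set.Ioi 0) := by
      have hcont : Continuous (fun ξ : ℝ => ξ * w τ ξ) := by
        have hwf : (fun ξ => w τ ξ)
            = fun ξ => lam * Real.exp (-(c * β / d) * ξ + η τ * ξ ^ 2 / (2 * d)) :=
          funext (hw τ)
        have hcw : Continuous (fun ξ => w τ ξ) := by rw [hwf]; fun_prop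
        exact continuous_id.mul hcw
      refine hgint.mono' hcont.aestronglyMeasurable ?_
      filter_upwards [ae_restrict_mem measurableSet_Ioi] with ξ hξ
      have hξ0 : (0:ℝ) < ξ := hξ
      have hwpos : 0 < w τ ξ := by rw [hw]; positivity
      rw [Real.norm_eq_abs, abs_of_nonneg (by positivity)]
      exact hbound ξ hξ
    calc (∫ ξ in Set.Ioi (0:ℝ), ξ * w τ ξ)
        ≤ ∫ ξ in Set.Ioi (0:ℝ), lam * (ξ * Real.exp (-(c * β / d) * ξ)) :=
          setIntegral_mono_on hfint hgint measurableSet_Ioi hbound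
      _ = lam * ∫ ξ in Set.Ioi (0:ℝ), ξ * Real.exp (-(c * β / d) * ξ) := by
          rw [integral_const_mul]
  -- exact value of the integral
  · have hr : 0 < c * β / d := by positivity
    have h := Real.integral_rpow_mul_exp_neg_mul_Ioi (a := 2) (r := c * β / d)
      (by norm_num) hr
    have hconv : (∫ ξ in Set.Ioi (0:ℝ), ξ * Real.exp (-(c * β / d) * ξ))
        = ∫ t in Set.Ioi (0:ℝ), t ^ ((2:ℝ) - 1) * Real.exp (-(c * β / d * t)) := by
      refine setIntegral_congr_fun measurableSet_Ioi (fun t ht => ?_)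
      rw [show (2:ℝ) - 1 = 1 by norm_num, Real.rpow_one]
      ring_nf
    rw [hconv, h, Real.Gamma_two, mul_one]
    rw [show ((1:ℝ) / (c * β / d)) ^ (2:ℝ) = ((1:ℝ) / (c * β / d)) ^ (2:ℕ) by
      rw [← Real.rpow_natCast]; norm_num]
    field_simp
end

section
/- Let c > 0, β ∈ (1/2, 1], and η(τ) := (β-1)/(1 + (2β-1)τ). Then η(τ) ≤ 0 for all τ ≥ 0, η(τ) → 0 as τ → ∞, and ∫₀^τ |η(τ - s)|/√s ds ≤ ((1-β)/(2β-1))·(2√2 + √2·log(1 + (2β-1)τ/2))/√τ for every τ > 0. -/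
open Real intervalIntegral Filter

set_option maxHeartbeats 1000000 in
/-- Properties of the coefficient `η(τ) = (β-1)/(1+(2β-1)τ)` for `β ∈ (1/2,1]`:
nonpositivity, vanishing at infinity, and a convolution estimate. -/
theorem eta_properties (c β : ℝ) (hc : 0 < c) (hβ : β ∈ Set.Ioc (1 / 2 : ℝ) 1)
    (η : ℝ → ℝ) (hη : ∀ τ, η τ = (β - 1) / (1 + (2 * β - 1) * τ)) :
    (∀ τ ≥ (0 : ℝ), η τ ≤ 0) ∧
    Tendsto η atTop (nhds 0) ∧
    (∀ τ > (0 : ℝ),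
      (∫ s in (0 : ℝ)..τ, |η (τ - s)| / Real.sqrt s)
        ≤ ((1 - β) / (2 * β - 1)) *
            (2 * Real.sqrt 2 + Real.sqrt 2 * Real.log (1 + (2 * β - 1) * τ / 2))
            / Real.sqrt τ) := by
  obtain ⟨hβ1, hβ2⟩ := hβ
  have ha : (0:ℝ) < 2 * β - 1 := by linarith
  have hCnn : (0:ℝ) ≤ 1 - β := by linarith
  set a : ℝ := 2 * β - 1 with ha_def
  refine ⟨?_, ?_, ?_⟩
  · -- nonpositivity
    intro τ hτ
    rw [hη]
    apply div_nonpos_of_nonpos_of_nonneg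
    · linarith
    · nlinarith [mul_nonneg ha.le hτ]
  · -- tendsto
    have h1 : Tendsto (fun τ : ℝ => (β - 1) / (1 + (2 * β - 1) * τ)) atTop (nhds 0) := by
      apply Tendsto.const_div_atTop
      exact tendsto_atTop_add_const_left _ 1 (Tendsto.const_mul_atTop ha tendsto_id)
    exact h1.congr (fun τ => (hη τ).symm)
  · -- the integral estimate
    intro τ hτ
    have hsτ : (0:ℝ) < Real.sqrt τ := Real.sqrt_pos.2 hτ
    have hs2 : (0:ℝ) < Real.sqrt 2 := Real.sqrt_pos.2 (by norm_num)
    have hsq2 : Real.sqrt 2 * Real.sqrt 2 = 2 := Real.mul_self_sqrt (by norm_num)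
    have hsqτ : Real.sqrt τ * Real.sqrt τ = τ := Real.mul_self_sqrt hτ.le
    -- the explicit integrand
    set f : ℝ → ℝ := fun s => (1 - β) / ((1 + a * (τ - s)) * Real.sqrt s) with hf_def
    -- denominator positivity on [0, τ]
    have hD : ∀ s ∈ Set.Icc (0:ℝ) τ, (0:ℝ) < 1 + a * (τ - s) := by
      intro s hs
      nlinarith [mul_nonneg ha.le (sub_nonneg.2 hs.2)]
    -- rewrite integrand
    have hcongr : (∫ s in (0:ℝ)..τ, |η (τ - s)| / Real.sqrt s) = ∫ s in (0:ℝ)..τ, f s := by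
      apply intervalIntegral.integral_congr
      intro s hs
      rw [Set.uIcc_of_le hτ.le] at hs
      have hDs := hD s hs
      show |η (τ - s)| / Real.sqrt s = f s
      rw [hη, hf_def]
      have habs : |(β - 1) / (1 + a * (τ - s))| = (1 - β) / (1 + a * (τ - s)) := by
        rw [abs_div, abs_of_pos hDs, abs_of_nonpos (by linarith : β - 1 ≤ 0)]
        ring_nf
      rw [habs, div_div]
    rw [hcongr]
    -- integrability of f on [0, τ/2]
    have hfm : MeasureTheory.AEStronglyMeasurable f
        (MeasureTheory.volume.restrict (Set.uIoc (0:ℝ) (τ/2))) := by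
      apply Measurable.aestronglyMeasurable
      rw [hf_def]
      fun_prop
    have hint1 : IntervalIntegrable f MeasureTheory.volume 0 (τ/2) := by
      apply IntervalIntegrable.mono_fun
        (((intervalIntegrable_rpow' (r := -(1/2)) (by norm_num)).const_mul (1 - β))) hfm
      filter_upwards [MeasureTheory.ae_restrict_mem measurableSet_uIoc] with s hs
      rw [Set.uIoc_of_le (by linarith : (0:ℝ) ≤ τ/2)] at hs
      have hs0 : 0 < s := hs.1
      have hsle : s ≤ τ := le_trans hs.2 (by linarith)
      have hDs : (0:ℝ) < 1 + a * (τ - s) := hD s ⟨hs0.le, hsle⟩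
      have hss : (0:ℝ) < Real.sqrt s := Real.sqrt_pos.2 hs0
      have hrp : s ^ (-(1/2) : ℝ) = (Real.sqrt s)⁻¹ := by
        rw [Real.rpow_neg hs0.le, Real.sqrt_eq_rpow]
      simp only [Real.norm_eq_abs, hf_def]
      rw [abs_of_nonneg (div_nonneg hCnn (mul_nonneg hDs.le hss.le)),
        abs_of_nonneg (mul_nonneg hCnn (by rw [hrp]; positivity)), hrp,
        ← div_eq_mul_inv]
      gcongr
      nlinarith [mul_nonneg (mul_nonneg ha.le (sub_nonneg.2 hsle)) hss.le]
    -- integrability of f on [τ/2, τ]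
    have hcont2 : ContinuousOn f (Set.Icc (τ/2) τ) := by
      rw [hf_def]
      apply ContinuousOn.div continuousOn_const
      · exact (Continuous.continuousOn (by fun_prop)).mul Real.continuous_sqrt.continuousOn
      · intro s hs
        have hs0 : 0 < s := lt_of_lt_of_le (by linarith) hs.1
        have hDs : (0:ℝ) < 1 + a * (τ - s) := hD s ⟨hs0.le, hs.2⟩
        have : (0:ℝ) < Real.sqrt s := Real.sqrt_pos.2 hs0
        positivity
    have hint2 : IntervalIntegrable f MeasureTheory.volume (τ/2) τ := by
      apply ContinuousOn.intervalIntegrable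
      rwa [Set.uIcc_of_le (by linarith)]
    -- split
    rw [← intervalIntegral.integral_add_adjacent_intervals hint1 hint2]
    have hsqdiv : Real.sqrt (τ/2) = Real.sqrt τ / Real.sqrt 2 := Real.sqrt_div hτ.le 2
    -- first piece bound
    have hb1 : (∫ s in (0:ℝ)..(τ/2), f s) ≤ (1 - β) / a * (2 * Real.sqrt 2) / Real.sqrt τ := by
      have hmono : (∫ s in (0:ℝ)..(τ/2), f s)
          ≤ ∫ s in (0:ℝ)..(τ/2), (2 * (1 - β) / (a * τ)) * s ^ (-(1/2) : ℝ) := by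
        apply intervalIntegral.integral_mono_on (by linarith) hint1
          ((intervalIntegrable_rpow' (by norm_num)).const_mul _)
        intro s hs
        rcases eq_or_lt_of_le hs.1 with h0 | h0
        · rw [hf_def, ← h0]
          simp [Real.zero_rpow (by norm_num : (-(1/2):ℝ) ≠ 0)]
        · have hs2' : s ≤ τ/2 := hs.2
          have hsle : s ≤ τ := by linarith
          have hDs : (0:ℝ) < 1 + a * (τ - s) := hD s ⟨hs.1, hsle⟩
          have hss : (0:ℝ) < Real.sqrt s := Real.sqrt_pos.2 h0
          have hrp : s ^ (-(1/2) : ℝ) = (Real.sqrt s)⁻¹ := by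
            rw [Real.rpow_neg h0.le, Real.sqrt_eq_rpow]
          rw [hf_def, hrp]
          have hDge : a * τ / 2 ≤ 1 + a * (τ - s) := by
            nlinarith [mul_nonneg ha.le (by linarith : (0:ℝ) ≤ τ - 2*s)]
          have h1 : (1 - β) / ((1 + a * (τ - s)) * Real.sqrt s)
              ≤ (1 - β) / ((a * τ / 2) * Real.sqrt s) := by
            gcongr
          refine h1.trans (le_of_eq ?_)
          field_simp
      refine hmono.trans (le_of_eq ?_)
      rw [intervalIntegral.integral_const_mul, integral_rpow (Or.inl (by norm_num))]
      have h0r : (0:ℝ) ^ ((-(1/2):ℝ) + 1) = 0 := by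
        rw [Real.zero_rpow (by norm_num)]
      have hτ2 : (τ/2 : ℝ) ^ ((-(1/2):ℝ) + 1) = Real.sqrt τ / Real.sqrt 2 := by
        rw [show ((-(1/2):ℝ) + 1) = (1/2 : ℝ) by norm_num, ← Real.sqrt_eq_rpow, hsqdiv]
      rw [h0r, hτ2]
      rw [show a * τ = a * (Real.sqrt τ * Real.sqrt τ) by rw [hsqτ]]
      have hu : Real.sqrt τ ≠ 0 := hsτ.ne'
      have hv : Real.sqrt 2 ≠ 0 := hs2.ne'
      have hane : a ≠ 0 := ha.ne'
      field_simp
      linear_combination (β * Real.sqrt τ - Real.sqrt τ) * hsq2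
    -- second piece bound
    have hb2 : (∫ s in (τ/2)..τ, f s)
        ≤ (1 - β) / a * (Real.sqrt 2 * Real.log (1 + a * τ / 2)) / Real.sqrt τ := by
      set m2 : ℝ → ℝ := fun s => (Real.sqrt 2 / Real.sqrt τ) * ((1 - β) / (1 + a * (τ - s)))
        with hm2_def
      have hcontm2 : ContinuousOn m2 (Set.Icc (τ/2) τ) := by
        rw [hm2_def]
        apply ContinuousOn.mul continuousOn_const
        apply ContinuousOn.div continuousOn_const
        · exact Continuous.continuousOn (by fun_prop)
        · intro s hs
          exact ne_of_gt (hD s ⟨le_trans (by linarith) hs.1, hs.2⟩)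
      have hintm2 : IntervalIntegrable m2 MeasureTheory.volume (τ/2) τ := by
        apply ContinuousOn.intervalIntegrable
        rwa [Set.uIcc_of_le (by linarith)]
      have hmono2 : (∫ s in (τ/2)..τ, f s) ≤ ∫ s in (τ/2)..τ, m2 s := by
        apply intervalIntegral.integral_mono_on (by linarith) hint2 hintm2
        intro s hs
        have hs0 : 0 < s := lt_of_lt_of_le (by linarith) hs.1
        have hDs : (0:ℝ) < 1 + a * (τ - s) := hD s ⟨hs0.le, hs.2⟩
        have hss : Real.sqrt τ / Real.sqrt 2 ≤ Real.sqrt s := by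
          rw [← hsqdiv]
          exact Real.sqrt_le_sqrt hs.1
        rw [hf_def, hm2_def]
        have h1 : (1 - β) / ((1 + a * (τ - s)) * Real.sqrt s)
            ≤ (1 - β) / ((1 + a * (τ - s)) * (Real.sqrt τ / Real.sqrt 2)) := by
          gcongr
        refine h1.trans (le_of_eq ?_)
        field_simp
      refine hmono2.trans (le_of_eq ?_)
      -- FTC
      have hFTC : (∫ s in (τ/2)..τ, m2 s)
          = (Real.sqrt 2 / Real.sqrt τ) * (-(1 - β) / a) * Real.log (1 + a * (τ - τ))
            - (Real.sqrt 2 / Real.sqrt τ) * (-(1 - β) / a) * Real.log (1 + a * (τ - τ/2)) := by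
        apply intervalIntegral.integral_eq_sub_of_hasDerivAt
          (f := fun s => (Real.sqrt 2 / Real.sqrt τ) * (-(1 - β) / a)
            * Real.log (1 + a * (τ - s)))
        · intro s hs
          rw [Set.uIcc_of_le (by linarith)] at hs
          have hs0 : 0 < s := lt_of_lt_of_le (by linarith) hs.1
          have hDs : (0:ℝ) < 1 + a * (τ - s) := hD s ⟨hs0.le, hs.2⟩
          have hd : HasDerivAt (fun s : ℝ => 1 + a * (τ - s)) (-a) s := by
            have h' : HasDerivAt (fun s : ℝ => τ - s) (-1) s := by
              simpa using (hasDerivAt_id s).const_sub τ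
            simpa using (h'.const_mul a).const_add 1
          have hlog := hd.log (ne_of_gt hDs)
          have hmul := hlog.const_mul ((Real.sqrt 2 / Real.sqrt τ) * (-(1 - β) / a))
          refine hmul.congr_deriv ?_
          rw [hm2_def]
          field_simp
        · exact hintm2
      rw [hFTC]
      simp only [sub_self, mul_zero, add_zero, Real.log_one]
      rw [show τ - τ/2 = τ/2 by ring, show a * (τ/2) = a * τ / 2 by ring]
      field_simp
      ring
    -- combine
    have hfinal := add_le_add hb1 hb2
    refine hfinal.trans (le_of_eq ?_)
    field_simp
end
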